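/- Let n ≥ 3 and define S̃(x₀,x₁,x₂) = (x₀ x₁^{n-1} x₂^{n-1})^{1/(2n-1)} · [ (n-1)((n-1)/x₁ + (n-1)/x₂ + 1/x₀) - ((n-1)/2)(x₁/(x₂x₀) + x₂/(x₁x₀) + x₀/(x₁x₂)) ] for positive reals x₀,x₁,x₂. Then ∂S̃/∂x₁ vanishes at (x₀,x₁,x₂) = (2(n-1), n, n). -/

import Mathlib

/-- The normalized total scalar curvature (up to constant) of invariant metrics
on the Stiefel manifold `SO(n+1)/SO(n-1)`. -/
noncomputable def stiefelS (n : ℕ) (x₀ x₁ x₂ : ℝ) : ℝ :=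
  (x₀ * x₁ ^ (n - 1) * x₂ ^ (n - 1)) ^ ((1 : ℝ) / (2 * n - 1)) *
    (((n : ℝ) - 1) * (((n : ℝ) - 1) / x₁ + ((n : ℝ) - 1) / x₂ + 1 / x₀)
      - (((n : ℝ) - 1) / 2) * (x₁ / (x₂ * x₀) + x₂ / (x₁ * x₀) + x₀ / (x₁ * x₂)))

theorem stiefel_first_deriv_zero (n : ℕ) (hn : 3 ≤ n) :
    deriv (fun x₁ : ℝ => stiefelS n (2 * ((n : ℝ) - 1)) x₁ (n : ℝ)) (n : ℝ) = 0 := by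
  have hN3 : (3:ℝ) ≤ (n:ℝ) := by exact_mod_cast hn
  set N : ℝ := (n:ℝ) with hNdef
  have hN0 : N ≠ 0 := by intro h; rw [h] at hN3; linarith
  have hN1 : N - 1 ≠ 0 := by intro h; nlinarith
  have h2N1 : 2 * N - 1 ≠ 0 := by intro h; nlinarith
  have hx0 : 2 * (N - 1) ≠ 0 := by intro h; nlinarith
  set x₀ : ℝ := 2 * (N - 1) with hx0def
  set p : ℝ := (1:ℝ) / (2 * N - 1) with hpdef
  have hNpos : 0 < N := by linarith
  have hupos : 0 < x₀ * N ^ (n - 1) * N ^ (n - 1) := by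
    have : 0 < x₀ := by rw [hx0def]; nlinarith
    positivity
  -- derivative of the inner polynomial part
  have h1 : HasDerivAt (fun x : ℝ => x₀ * x ^ (n - 1) * N ^ (n - 1))
      (x₀ * (((n - 1 : ℕ) : ℝ) * N ^ (n - 1 - 1)) * N ^ (n - 1)) N :=
    (((hasDerivAt_pow (n - 1) N).const_mul x₀).mul_const (N ^ (n - 1)))
  have hA : HasDerivAt (fun x : ℝ => (x₀ * x ^ (n - 1) * N ^ (n - 1)) ^ p)
      ((x₀ * (((n - 1 : ℕ) : ℝ) * N ^ (n - 1 - 1)) * N ^ (n - 1)) * p *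
        (x₀ * N ^ (n - 1) * N ^ (n - 1)) ^ (p - 1)) N :=
    h1.rpow_const (Or.inl hupos.ne')
  -- derivative of the bracket
  have hd1 : HasDerivAt (fun x : ℝ => (N - 1) / x)
      ((0 * N - (N - 1) * 1) / N ^ 2) N :=
    (hasDerivAt_const N (N - 1)).div (hasDerivAt_id N) hN0
  have hd2 : HasDerivAt (fun x : ℝ => x / (N * x₀)) (1 / (N * x₀)) N := by
    simpa using (hasDerivAt_id N).div_const (N * x₀)
  have hden2 : N * x₀ ≠ 0 := mul_ne_zero hN0 hx0
  have hd3 : HasDerivAt (fun x : ℝ => N / (x * x₀))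
      ((0 * (N * x₀) - N * x₀) / (N * x₀) ^ 2) N := by
    have hden : HasDerivAt (fun x : ℝ => x * x₀) x₀ N := by
      simpa using (hasDerivAt_id N).mul_const x₀
    exact (hasDerivAt_const N N).div hden hden2
  have hNN : N * N ≠ 0 := mul_ne_zero hN0 hN0
  have hd4 : HasDerivAt (fun x : ℝ => x₀ / (x * N))
      ((0 * (N * N) - x₀ * N) / (N * N) ^ 2) N := by
    have hden : HasDerivAt (fun x : ℝ => x * N) N N := by
      simpa using (hasDerivAt_id N).mul_const N
    exact (hasDerivAt_const N x₀).div hden hNN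
  have hB : HasDerivAt (fun x : ℝ =>
      (N - 1) * ((N - 1) / x + (N - 1) / N + 1 / x₀)
        - ((N - 1) / 2) * (x / (N * x₀) + N / (x * x₀) + x₀ / (x * N)))
      ((N - 1) * ((0 * N - (N - 1) * 1) / N ^ 2)
        - ((N - 1) / 2) * (1 / (N * x₀) + (0 * (N * x₀) - N * x₀) / (N * x₀) ^ 2
          + (0 * (N * N) - x₀ * N) / (N * N) ^ 2)) N :=
    ((((hd1.add_const ((N - 1) / N)).add_const (1 / x₀)).const_mul (N - 1)).sub
      (((hd2.add hd3).add hd4).const_mul ((N - 1) / 2)))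
  have hF := hA.mul hB
  have hD : deriv (fun x₁ : ℝ => stiefelS n x₀ x₁ N) N
      = ((x₀ * (((n - 1 : ℕ) : ℝ) * N ^ (n - 1 - 1)) * N ^ (n - 1)) * p *
          (x₀ * N ^ (n - 1) * N ^ (n - 1)) ^ (p - 1)) *
        ((N - 1) * ((N - 1) / N + (N - 1) / N + 1 / x₀)
          - ((N - 1) / 2) * (N / (N * x₀) + N / (N * x₀) + x₀ / (N * N)))
        + (x₀ * N ^ (n - 1) * N ^ (n - 1)) ^ p *
        ((N - 1) * ((0 * N - (N - 1) * 1) / N ^ 2)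
          - ((N - 1) / 2) * (1 / (N * x₀) + (0 * (N * x₀) - N * x₀) / (N * x₀) ^ 2
            + (0 * (N * N) - x₀ * N) / (N * N) ^ 2)) := HasDerivAt.deriv hF
  rw [hD]
  have e1 : n - 1 - 1 = n - 2 := by omega
  have e2 : n - 1 = (n - 2) + 1 := by omega
  have e3 : ((n - 1 : ℕ) : ℝ) = N - 1 := by
    rw [Nat.cast_sub (by omega), Nat.cast_one]
  rw [e1, e3, e2, pow_succ]
  set K : ℝ := N ^ (n - 2) with hK
  set u : ℝ := x₀ * (K * N) * (K * N) with hu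
  have hune : u ≠ 0 := by
    have : 0 < x₀ := by rw [hx0def]; nlinarith
    have hKpos : 0 < K := by rw [hK]; positivity
    rw [hu]; positivity
  have hup : u ^ p = u ^ (p - 1) * u := by
    rw [← Real.rpow_add_one hune (p - 1), sub_add_cancel]
  rw [hup]
  have key : (x₀ * ((N - 1) * K) * (K * N)) * p *
        ((N - 1) * ((N - 1) / N + (N - 1) / N + 1 / x₀)
          - ((N - 1) / 2) * (N / (N * x₀) + N / (N * x₀) + x₀ / (N * N)))
      + u *
        ((N - 1) * ((0 * N - (N - 1) * 1) / N ^ 2)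
          - ((N - 1) / 2) * (1 / (N * x₀) + (0 * (N * x₀) - N * x₀) / (N * x₀) ^ 2
            + (0 * (N * N) - x₀ * N) / (N * N) ^ 2)) = 0 := by
    rw [hu, hpdef, hx0def]
    field_simp
    ring
  linear_combination u ^ (p - 1) * key
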